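/- (Hankel rationality criterion) Let F be a field and (a_m)_{m≥0} a sequence in F. The power series Σ_m a_m t^m is a rational function (quotient of polynomials) if and only if there exist j > 0 and j₀ > 0 such that for every m > j₀, the (j+1)×(j+1) Hankel determinant det[a_{m+i+k}]_{0≤i,k≤j} vanishes. -/

import Mathlib

open PowerSeries Matrix Finset

namespace Stmt8Aux

variable {F : Type*} [Field F]

/-- The `J × J` Hankel matrix of the sequence `a` starting at `m`. -/
def Hk (a : ℕ → F) (J m : ℕ) : Matrix (Fin J) (Fin J) F :=
  Matrix.of fun i k => a (m + i + k)

/-- Convolution formula for the coefficients of `q * mk a`. -/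
lemma coeff_mul_mk (a : ℕ → F) (q : Polynomial F) {D n : ℕ} (hq : q.natDegree ≤ D)
    (hn : D ≤ n) :
    PowerSeries.coeff n ((q : PowerSeries F) * PowerSeries.mk a) =
      ∑ s ∈ Finset.range (D + 1), q.coeff s * a (n - s) := by
  have h1 : PowerSeries.coeff n ((q : PowerSeries F) * PowerSeries.mk a) =
      ∑ s ∈ Finset.range (n + 1), q.coeff s * a (n - s) := by
    rw [PowerSeries.coeff_mul, Finset.Nat.sum_antidiagonal_eq_sum_range_succ_mk]
    exact Finset.sum_congr rfl fun s _ => by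
      rw [Polynomial.coeff_coe, PowerSeries.coeff_mk]
  rw [h1]
  symm
  refine Finset.sum_subset (Finset.range_subset_range.mpr (by omega)) ?_
  intro s hs1 hs2
  have hD : D < s := by
    by_contra hcon
    exact hs2 (Finset.mem_range.mpr (by omega))
  rw [Polynomial.coeff_eq_zero_of_natDegree_lt (lt_of_le_of_lt hq hD), zero_mul]

/-- An eventual linear recurrence implies rationality. -/
lemma rational_of_rec (a : ℕ → F) (J m₀ : ℕ) (c : ℕ → F)
    (hrec : ∀ n, m₀ ≤ n → a (n + J) = ∑ k ∈ Finset.range J, c k * a (n + k)) :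
    ∃ p q : Polynomial F, q ≠ 0 ∧
      (q : PowerSeries F) * PowerSeries.mk a = (p : PowerSeries F) := by
  classical
  set g : ℕ → F := fun s => if s = 0 then 1 else - c (J - s) with hg
  set q : Polynomial F :=
    ∑ s ∈ Finset.range (J + 1), Polynomial.C (g s) * Polynomial.X ^ s with hqdef
  have hcoeff : ∀ s, q.coeff s = if s < J + 1 then g s else 0 := by
    intro s
    rw [hqdef, Polynomial.finset_sum_coeff]
    simp_rw [Polynomial.coeff_C_mul_X_pow]
    rw [Finset.sum_ite_eq (Finset.range (J + 1)) s g]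
    simp
  have hdeg : q.natDegree ≤ J := by
    rw [Polynomial.natDegree_le_iff_coeff_eq_zero]
    intro N hN
    rw [hcoeff N, if_neg (by omega)]
  have hq0 : q ≠ 0 := by
    intro h
    have h1 : q.coeff 0 = 1 := by
      rw [hcoeff 0, if_pos (by omega)]
      simp [hg]
    rw [h] at h1
    simp at h1
  have key : ∀ n, m₀ + J ≤ n →
      PowerSeries.coeff n ((q : PowerSeries F) * PowerSeries.mk a) = 0 := by
    intro n hn
    rw [coeff_mul_mk a q hdeg (by omega), Finset.sum_range_succ']
    have h0 : q.coeff 0 * a (n - 0) = a n := by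
      rw [hcoeff 0, if_pos (by omega)]
      simp [hg]
    have h1 : ∀ i ∈ Finset.range J, q.coeff (i + 1) * a (n - (i + 1))
        = -(c (J - 1 - i) * a (n - J + (J - 1 - i))) := by
      intro i hi
      rw [Finset.mem_range] at hi
      rw [hcoeff (i + 1), if_pos (by omega)]
      simp only [hg]
      rw [if_neg (by omega)]
      have e1 : J - (i + 1) = J - 1 - i := by omega
      have e2 : n - (i + 1) = n - J + (J - 1 - i) := by omega
      rw [e1, e2, neg_mul]
    rw [Finset.sum_congr rfl h1, h0, Finset.sum_neg_distrib,
      Finset.sum_range_reflect (fun k => c k * a (n - J + k)) J]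
    have h2 := hrec (n - J) (by omega)
    have e3 : n - J + J = n := by omega
    rw [e3] at h2
    rw [← h2]
    ring
  refine ⟨PowerSeries.trunc (m₀ + J) ((q : PowerSeries F) * PowerSeries.mk a), q, hq0, ?_⟩
  ext n
  rw [Polynomial.coeff_coe, PowerSeries.coeff_trunc]
  by_cases h : n < m₀ + J
  · rw [if_pos h]
  · rw [if_neg h, key n (by omega)]

/-- If the small Hankel determinants are nonzero, the last coordinate of any kernel vector
of the big Hankel matrix is nonzero. -/
lemma vlast_ne (a : ℕ → F) {J j₀ m : ℕ} (hm : j₀ < m)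
    (hsmall : ∀ m', j₀ < m' → (Hk a J m').det ≠ 0)
    {v : Fin (J + 1) → F} (hv : v ≠ 0) (hmv : (Hk a (J + 1) m) *ᵥ v = 0) :
    v (Fin.last J) ≠ 0 := by
  intro hlast
  apply hsmall m hm
  rw [← Matrix.exists_mulVec_eq_zero_iff]
  refine ⟨fun k => v k.castSucc, ?_, ?_⟩
  · obtain ⟨i, hi⟩ := Function.ne_iff.mp hv
    have hine : i ≠ Fin.last J := by
      intro h
      exact hi (by simpa [h] using hlast)
    obtain ⟨i', rfl⟩ := Fin.exists_castSucc_eq.mpr hine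
    intro h
    exact hi (congrFun h i')
  · funext i
    have h := congrFun hmv i.castSucc
    simp only [Matrix.mulVec, dotProduct, Hk, Matrix.of_apply, Pi.zero_apply] at h ⊢
    rw [Fin.sum_univ_castSucc] at h
    simp only [Fin.coe_castSucc, Fin.val_last, hlast, mul_zero, add_zero] at h
    exact h

/-- Zero propagation: if the big Hankel det at `m` vanishes and the small one at `m`
vanishes, the small one at `m + 1` vanishes too. -/
lemma det_prop (a : ℕ → F) {J m : ℕ}
    (hbig : (Hk a (J + 1) m).det = 0) (hsm : (Hk a J m).det = 0) :
    (Hk a J (m + 1)).det = 0 := by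
  obtain ⟨μ, hμ0, hμ⟩ := Matrix.exists_mulVec_eq_zero_iff.mpr hbig
  have hrowμ : ∀ i : Fin (J + 1), ∑ k : Fin (J + 1), a (m + i + k) * μ k = 0 := by
    intro i
    have := congrFun hμ i
    simpa [Matrix.mulVec, dotProduct, Hk] using this
  by_cases hlast : μ (Fin.last J) = 0
  · rw [← Matrix.exists_mulVec_eq_zero_iff]
    refine ⟨fun k => μ k.castSucc, ?_, ?_⟩
    · obtain ⟨i, hi⟩ := Function.ne_iff.mp hμ0
      have hine : i ≠ Fin.last J := by
        intro h
        exact hi (by simpa [h] using hlast)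
      obtain ⟨i', rfl⟩ := Fin.exists_castSucc_eq.mpr hine
      intro h
      exact hi (congrFun h i')
    · funext i
      have h := hrowμ i.succ
      rw [Fin.sum_univ_castSucc] at h
      simp only [Fin.coe_castSucc, Fin.val_last, hlast, mul_zero, add_zero, Fin.val_succ] at h
      simp only [Matrix.mulVec, dotProduct, Hk, Matrix.of_apply, Pi.zero_apply]
      rw [← h]
      apply Finset.sum_congr rfl
      intro k _
      congr 2
      omega
  · obtain ⟨ν, hν0, hν⟩ := Matrix.exists_vecMul_eq_zero_iff.mpr hsm
    have hcolν : ∀ k : Fin J, ∑ i : Fin J, ν i * a (m + i + k) = 0 := by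
      intro k
      have := congrFun hν k
      simpa [Matrix.vecMul, dotProduct, Hk] using this
    rw [← Matrix.exists_vecMul_eq_zero_iff]
    refine ⟨ν, hν0, ?_⟩
    funext k
    simp only [Matrix.vecMul, dotProduct, Hk, Matrix.of_apply, Pi.zero_apply]
    by_cases hk : (k : ℕ) + 1 < J
    · have hfin : ((⟨(k : ℕ) + 1, hk⟩ : Fin J) : ℕ) = (k : ℕ) + 1 := rfl
      have h2 := hcolν ⟨(k : ℕ) + 1, hk⟩
      rw [hfin] at h2
      rw [← h2]
      apply Finset.sum_congr rfl
      intro i _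
      congr 2
      omega
    · -- k + 1 = J : use the column relation from μ
      have hkJ : (k : ℕ) + 1 = J := by omega
      have hAi : ∀ i : Fin J, a (m + 1 + i + k) * μ (Fin.last J) =
          -∑ k' : Fin J, a (m + i + k') * μ k'.castSucc := by
        intro i
        have h := hrowμ i.castSucc
        rw [Fin.sum_univ_castSucc] at h
        simp only [Fin.coe_castSucc, Fin.val_last] at h
        have e : m + 1 + (i : ℕ) + (k : ℕ) = m + (i : ℕ) + J := by omega
        rw [e]
        linear_combination h
      have hmain : (∑ i : Fin J, ν i * a (m + 1 + i + k)) * μ (Fin.last J) = 0 := by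
        rw [Finset.sum_mul]
        calc ∑ i : Fin J, ν i * a (m + 1 + i + k) * μ (Fin.last J)
            = ∑ i : Fin J, ν i * (a (m + 1 + i + k) * μ (Fin.last J)) := by
              apply Finset.sum_congr rfl; intro i _; ring
          _ = ∑ i : Fin J, ν i * -∑ k' : Fin J, a (m + i + k') * μ k'.castSucc := by
              apply Finset.sum_congr rfl; intro i _; rw [hAi i]
          _ = -∑ i : Fin J, ∑ k' : Fin J, ν i * a (m + i + k') * μ k'.castSucc := by
              rw [← Finset.sum_neg_distrib]
              apply Finset.sum_congr rfl; intro i _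
              rw [mul_neg, Finset.mul_sum]
              congr 1
              apply Finset.sum_congr rfl; intro k' _; ring
          _ = -∑ k' : Fin J, (∑ i : Fin J, ν i * a (m + i + k')) * μ k'.castSucc := by
              rw [Finset.sum_comm]
              congr 1
              apply Finset.sum_congr rfl; intro k' _
              rw [Finset.sum_mul]
          _ = 0 := by simp [hcolν]
      rcases mul_eq_zero.mp hmain with h | h
      · exact h
      · exact absurd h hlast

/-- Case B: big Hankel dets vanish but small ones don't; extract a linear recurrence. -/
lemma rec_of_caseB (a : ℕ → F) (J j₀ : ℕ)
    (hbig : ∀ m, j₀ < m → (Hk a (J + 1) m).det = 0)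
    (hsmall : ∀ m, j₀ < m → (Hk a J m).det ≠ 0) :
    ∃ c : Fin J → F, ∀ n, j₀ + 1 ≤ n → a (n + J) = ∑ k : Fin J, c k * a (n + (k : ℕ)) := by
  classical
  set m₀ := j₀ + 1 with hm₀
  obtain ⟨μ, hμ0, hμ⟩ := Matrix.exists_mulVec_eq_zero_iff.mpr (hbig m₀ (by omega))
  have hL : μ (Fin.last J) ≠ 0 := vlast_ne a (by omega) hsmall hμ0 hμ
  set c : Fin J → F := fun k => -(μ k.castSucc) / μ (Fin.last J) with hc
  set b : ℕ → F := fun n => a (n + J) - ∑ k : Fin J, c k * a (n + (k : ℕ)) with hb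
  have hrel : ∀ i : Fin (J + 1), b (m₀ + (i : ℕ)) = 0 := by
    intro i
    have h := congrFun hμ i
    simp only [Matrix.mulVec, dotProduct, Hk, Matrix.of_apply, Pi.zero_apply] at h
    rw [Fin.sum_univ_castSucc] at h
    simp only [Fin.coe_castSucc, Fin.val_last] at h
    have hsum : ∑ k : Fin J, c k * a (m₀ + (i : ℕ) + (k : ℕ))
        = (∑ k : Fin J, -(a (m₀ + (i : ℕ) + (k : ℕ)) * μ k.castSucc)) / μ (Fin.last J) := by
      rw [Finset.sum_div]
      apply Finset.sum_congr rfl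
      intro k _
      simp only [hc]
      ring
    simp only [hb]
    rw [hsum, sub_eq_zero, eq_div_iff hL, Finset.sum_neg_distrib]
    linear_combination h
  have hball : ∀ n, m₀ ≤ n → b n = 0 := by
    intro n
    induction n using Nat.strong_induction_on with
    | _ n IH2 =>
      intro hn
      by_cases hsm : n ≤ m₀ + J
      · have h := hrel ⟨n - m₀, by omega⟩
        have e : m₀ + (n - m₀) = n := by omega
        simpa [e] using h
      · set m := n - J with hmdef
        have hmj : j₀ < m := by omega
        obtain ⟨v, hv0, hv⟩ := Matrix.exists_mulVec_eq_zero_iff.mpr (hbig m hmj)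
        have hvL : v (Fin.last J) ≠ 0 := vlast_ne a hmj hsmall hv0 hv
        have hrow : ∀ i : Fin (J + 1), ∑ k : Fin (J + 1), a (m + i + k) * v k = 0 := by
          intro i
          have := congrFun hv i
          simpa [Matrix.mulVec, dotProduct, Hk] using this
        have hdot : ∑ k : Fin (J + 1), b (m + (k : ℕ)) * v k = 0 := by
          have expand : ∀ k : Fin (J + 1), b (m + (k : ℕ)) * v k =
              a (m + ((Fin.last J : Fin (J + 1)) : ℕ) + (k : ℕ)) * v k
              - ∑ k' : Fin J, c k' * (a (m + ((k'.castSucc : Fin (J + 1)) : ℕ) + (k : ℕ)) * v k) := by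
            intro k
            simp only [hb, Fin.val_last, Fin.coe_castSucc, sub_mul, Finset.sum_mul]
            congr 1
            · congr 2
              omega
            · apply Finset.sum_congr rfl
              intro k' _
              rw [mul_assoc]
              congr 3
              omega
          rw [Finset.sum_congr rfl (fun k _ => expand k), Finset.sum_sub_distrib,
            hrow (Fin.last J), Finset.sum_comm]
          simp only [← Finset.mul_sum]
          have h3 : ∀ x : Fin J, ∑ k : Fin (J + 1), a (m + (x : ℕ) + (k : ℕ)) * v k = 0 := by
            intro x
            simpa using hrow x.castSucc
          simp [h3]
        rw [Fin.sum_univ_castSucc] at hdot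
        have hz : ∀ k : Fin J, b (m + ((k.castSucc : Fin (J + 1)) : ℕ)) = 0 := by
          intro k
          exact IH2 (m + (k : ℕ)) (by simp only [hmdef]; omega) (by omega)
        simp only [Fin.coe_castSucc] at hz hdot
        rw [Finset.sum_congr rfl (fun k _ => by rw [hz k, zero_mul]),
          Finset.sum_const_zero, zero_add, Fin.val_last] at hdot
        have e : m + J = n := by omega
        rw [e] at hdot
        rcases mul_eq_zero.mp hdot with h | h
        · exact h
        · exact absurd h hvL
  refine ⟨c, fun n hn => ?_⟩
  have := hball n hn
  simp only [hb] at this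
  linear_combination this

/-- Backward direction: eventual vanishing of all size-(J+1) Hankel dets gives rationality. -/
lemma rational_of_hankel (a : ℕ → F) :
    ∀ J j₀ : ℕ, (∀ m, j₀ < m → (Hk a (J + 1) m).det = 0) →
    ∃ p q : Polynomial F, q ≠ 0 ∧
      (q : PowerSeries F) * PowerSeries.mk a = (p : PowerSeries F) := by
  intro J
  induction J with
  | zero =>
    intro j₀ h
    apply rational_of_rec a 0 (j₀ + 1) (fun _ => 0)
    intro n hn
    have h1 := h n (by omega)
    rw [Matrix.det_fin_one] at h1
    simp only [Hk, Matrix.of_apply] at h1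
    simpa using h1
  | succ J IH =>
    intro j₀ h
    by_cases hc : ∃ m₁, j₀ < m₁ ∧ (Hk a (J + 1) m₁).det = 0
    · obtain ⟨m₁, hm₁, hdet⟩ := hc
      apply IH m₁
      intro m hm
      have hall : ∀ d : ℕ, (Hk a (J + 1) (m₁ + d)).det = 0 := by
        intro d
        induction d with
        | zero => simpa using hdet
        | succ d hd =>
          have hb := h (m₁ + d) (by omega)
          have := det_prop a hb hd
          exact this
      have := hall (m - m₁)
      rwa [Nat.add_sub_cancel' (le_of_lt hm)] at this
    · push_neg at hc
      obtain ⟨c, hrec⟩ := rec_of_caseB a (J + 1) j₀ h hc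
      set c' : ℕ → F := fun k => if hk : k < J + 1 then c ⟨k, hk⟩ else 0 with hc'
      apply rational_of_rec a (J + 1) (j₀ + 1) c'
      intro n hn
      rw [hrec n hn]
      rw [show (∑ k : Fin (J + 1), c k * a (n + (k : ℕ)))
          = ∑ k : Fin (J + 1), c' (k : ℕ) * a (n + (k : ℕ)) from
        Finset.sum_congr rfl (fun k _ => by simp [hc', k.isLt]; intro h; exact absurd k.isLt (by omega))]
      exact Fin.sum_univ_eq_sum_range (fun k => c' k * a (n + k)) (J + 1)

/-- Forward direction. -/
lemma hankel_of_rational (a : ℕ → F) (p q : Polynomial F) (hq : q ≠ 0)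
    (heq : (q : PowerSeries F) * PowerSeries.mk a = (p : PowerSeries F)) :
    ∃ j > 0, ∃ j₀ > 0, ∀ m > j₀,
      Matrix.det (Matrix.of fun i k : Fin (j + 1) => a (m + i + k)) = 0 := by
  set d := q.natDegree with hd
  refine ⟨d + 1, by omega, p.natDegree + 1, by omega, ?_⟩
  intro m hm
  rw [← Matrix.exists_mulVec_eq_zero_iff]
  refine ⟨fun k : Fin (d + 1 + 1) => q.coeff (d + 1 - (k : ℕ)), ?_, ?_⟩
  · obtain ⟨s, hs⟩ : ∃ s, q.coeff s ≠ 0 := by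
      by_contra hcon
      push_neg at hcon
      exact hq (Polynomial.ext fun n => by simp [hcon n])
    have hsd : s ≤ d := Polynomial.le_natDegree_of_ne_zero hs
    intro h0
    apply hs
    have := congrFun h0 ⟨d + 1 - s, by omega⟩
    simpa [show d + 1 - (d + 1 - s) = s from by omega] using this
  · funext i
    have hco : PowerSeries.coeff (m + (i : ℕ) + d + 1)
        ((q : PowerSeries F) * PowerSeries.mk a) = 0 := by
      rw [heq, Polynomial.coeff_coe]
      exact Polynomial.coeff_eq_zero_of_natDegree_lt (by omega)
    rw [coeff_mul_mk a q (D := d + 1) (by omega) (by omega),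
      ← Finset.sum_range_reflect] at hco
    simp only [Matrix.mulVec, dotProduct, Matrix.of_apply, Pi.zero_apply]
    rw [Fin.sum_univ_eq_sum_range
      (fun k => a (m + (i : ℕ) + k) * q.coeff (d + 1 - k)) (d + 1 + 1)]
    rw [← hco]
    apply Finset.sum_congr rfl
    intro s hs
    rw [Finset.mem_range] at hs
    rw [mul_comm, show d + 1 + 1 - 1 - s = d + 1 - s from by omega,
      show m + (i : ℕ) + d + 1 - (d + 1 - s) = m + (i : ℕ) + s from by omega]

end Stmt8Aux

open Stmt8Aux in
/-- Hankel rationality criterion: Σ a_m t^m ∈ F[[t]] is a rational function iff for some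
j > 0 and j₀ > 0, all (j+1)×(j+1) Hankel determinants det[a_{m+i+k}] with m > j₀ vanish. -/
theorem stmt8 {F : Type*} [Field F] (a : ℕ → F) :
    (∃ p q : Polynomial F, q ≠ 0 ∧
        (q : PowerSeries F) * PowerSeries.mk a = (p : PowerSeries F)) ↔
    (∃ j > 0, ∃ j₀ > 0, ∀ m > j₀,
        Matrix.det (Matrix.of fun i k : Fin (j + 1) => a (m + i + k)) = 0) := by
  constructor
  · rintro ⟨p, q, hq, heq⟩
    exact hankel_of_rational a p q hq heq
  · rintro ⟨j, hj, j₀, hj₀, h⟩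
    exact rational_of_hankel a j j₀ (fun m hm => h m hm)
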